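/- Let Φ denote the cumulative distribution function of the standard normal distribution, Φ(z) = (2π)^{-1/2} ∫_{−∞}^z e^{−u²/2} du. Then for every z ∈ ℝ, every real n ≥ 1 and every r ∈ [0,1]: |Φ(√((n+r)/n) · z) − Φ(z)| ≤ √r / √n. -/

import Mathlib

open MeasureTheory

/-- The standard normal cumulative distribution function. -/
noncomputable def stdNormalCDF (z : ℝ) : ℝ :=
  (Real.sqrt (2 * Real.pi))⁻¹ * ∫ u in Set.Iic z, Real.exp (-u ^ 2 / 2)

lemma gauss_integrable : Integrable (fun u : ℝ => Real.exp (-u ^ 2 / 2)) := by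
  have h := integrable_exp_neg_mul_sq (b := (1/2 : ℝ)) (by norm_num)
  convert h using 2 with u
  ring_nf

lemma stdNormalCDF_eq (x : ℝ) : stdNormalCDF x =
    (Real.sqrt (2 * Real.pi))⁻¹ * ((∫ u in Set.Iic (0:ℝ), Real.exp (-u ^ 2 / 2))
      + ∫ u in (0:ℝ)..x, Real.exp (-u ^ 2 / 2)) := by
  unfold stdNormalCDF
  rw [← intervalIntegral.integral_Iic_sub_Iic gauss_integrable.integrableOn
    gauss_integrable.integrableOn]
  ring

lemma hasDerivAt_stdNormalCDF (x : ℝ) : HasDerivAt stdNormalCDF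
    ((Real.sqrt (2 * Real.pi))⁻¹ * Real.exp (-x ^ 2 / 2)) x := by
  have hcont : Continuous fun u : ℝ => Real.exp (-u ^ 2 / 2) := by continuity
  have h1 : HasDerivAt (fun y => ∫ u in (0:ℝ)..y, Real.exp (-u ^ 2 / 2))
      (Real.exp (-x ^ 2 / 2)) x :=
    intervalIntegral.integral_hasDerivAt_right gauss_integrable.intervalIntegrable
      hcont.aestronglyMeasurable.stronglyMeasurableAtFilter hcont.continuousAt
  have h2 := ((h1.const_add (∫ u in Set.Iic (0:ℝ), Real.exp (-u ^ 2 / 2))).const_mul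
      (Real.sqrt (2 * Real.pi))⁻¹)
  have : stdNormalCDF = fun y => (Real.sqrt (2 * Real.pi))⁻¹ *
      ((∫ u in Set.Iic (0:ℝ), Real.exp (-u ^ 2 / 2))
        + ∫ u in (0:ℝ)..y, Real.exp (-u ^ 2 / 2)) := funext stdNormalCDF_eq
  rw [this]
  exact h2

/-- `|ξ| exp(-ξ²/2) ≤ √(2π)` since `|ξ| ≤ exp(ξ²/2)` and `1 ≤ √(2π)`. -/
lemma density_mul_abs_le (ξ : ℝ) :
    (Real.sqrt (2 * Real.pi))⁻¹ * Real.exp (-ξ ^ 2 / 2) * |ξ| ≤ 1 := by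
  have h1 : |ξ| ≤ Real.exp (ξ ^ 2 / 2) := by
    calc |ξ| ≤ 1 + ξ ^ 2 / 2 := by nlinarith [sq_abs ξ, sq_nonneg (|ξ| - 1)]
    _ ≤ Real.exp (ξ ^ 2 / 2) := by
        have := Real.add_one_le_exp (ξ ^ 2 / 2); linarith
  have h2 : Real.exp (-ξ ^ 2 / 2) * |ξ| ≤ 1 := by
    have := mul_le_mul_of_nonneg_left h1 (Real.exp_pos (-ξ ^ 2 / 2)).le
    rw [neg_div] at this ⊢
    rwa [← Real.exp_add, neg_add_cancel, Real.exp_zero] at this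
  have h3 : (1:ℝ) ≤ Real.sqrt (2 * Real.pi) := by
    rw [show (1:ℝ) = Real.sqrt 1 by simp]
    exact Real.sqrt_le_sqrt (by nlinarith [Real.pi_gt_three])
  have h4 : (Real.sqrt (2 * Real.pi))⁻¹ ≤ 1 := by
    rw [inv_le_one_iff₀]; right; exact h3
  have h5 : 0 ≤ Real.exp (-ξ ^ 2 / 2) * |ξ| := by positivity
  calc (Real.sqrt (2 * Real.pi))⁻¹ * Real.exp (-ξ ^ 2 / 2) * |ξ|
      = (Real.sqrt (2 * Real.pi))⁻¹ * (Real.exp (-ξ ^ 2 / 2) * |ξ|) := by ring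
    _ ≤ 1 * 1 := mul_le_mul h4 h2 h5 zero_le_one
    _ = 1 := one_mul 1

/-- MVT bound. -/
lemma key_bound {a b B : ℝ} (hab : a ≤ b) (hB : 0 ≤ B)
    (h : ∀ ξ ∈ Set.Ioo a b,
      (Real.sqrt (2 * Real.pi))⁻¹ * Real.exp (-ξ ^ 2 / 2) * (b - a) ≤ B) :
    |stdNormalCDF b - stdNormalCDF a| ≤ B := by
  rcases eq_or_lt_of_le hab with rfl | hab
  · simpa using hB
  · obtain ⟨ξ, hξ, hslope⟩ := exists_hasDerivAt_eq_slope stdNormalCDF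
      (fun x => (Real.sqrt (2 * Real.pi))⁻¹ * Real.exp (-x ^ 2 / 2)) hab
      (fun x _ => (hasDerivAt_stdNormalCDF x).continuousAt.continuousWithinAt)
      (fun x _ => hasDerivAt_stdNormalCDF x)
    have hderiv_nonneg : 0 ≤ (Real.sqrt (2 * Real.pi))⁻¹ * Real.exp (-ξ ^ 2 / 2) := by
      positivity
    have heq : stdNormalCDF b - stdNormalCDF a =
        (Real.sqrt (2 * Real.pi))⁻¹ * Real.exp (-ξ ^ 2 / 2) * (b - a) := by
      rw [hslope, div_mul_cancel₀ _ (sub_ne_zero.mpr hab.ne')]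
    rw [heq, abs_of_nonneg (mul_nonneg hderiv_nonneg (by linarith))]
    exact h ξ hξ

/-- for every `z ∈ ℝ`, real `n ≥ 1` and `r ∈ [0,1]`,
`|Φ(√((n+r)/n)·z) − Φ(z)| ≤ √r/√n` for the standard normal cdf `Φ`. -/
theorem abs_stdNormalCDF_scale_sub_le (z : ℝ) (n : ℝ) (hn : 1 ≤ n)
    (r : ℝ) (hr0 : 0 ≤ r) (hr1 : r ≤ 1) :
    |stdNormalCDF (Real.sqrt ((n + r) / n) * z) - stdNormalCDF z|
      ≤ Real.sqrt r / Real.sqrt n := by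
  have hn0 : (0:ℝ) < n := lt_of_lt_of_le one_pos hn
  have hsn : (0:ℝ) < Real.sqrt n := Real.sqrt_pos.mpr hn0
  set c := Real.sqrt ((n + r) / n) with hc_def
  have hc1 : 1 ≤ c := by
    rw [hc_def, show (1:ℝ) = Real.sqrt 1 by simp]
    apply Real.sqrt_le_sqrt
    rw [le_div_iff₀ hn0]; linarith
  have hB : 0 ≤ Real.sqrt r / Real.sqrt n := by positivity
  -- c - 1 ≤ √r / √n
  have hkey : c - 1 ≤ Real.sqrt r / Real.sqrt n := by
    have h1 : Real.sqrt (n + r) ≤ Real.sqrt n + Real.sqrt r := by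
      have h2 : n + r ≤ (Real.sqrt n + Real.sqrt r) ^ 2 := by
        rw [add_sq, Real.sq_sqrt hn0.le, Real.sq_sqrt hr0]
        nlinarith [Real.sqrt_nonneg n, Real.sqrt_nonneg r]
      calc Real.sqrt (n + r) ≤ Real.sqrt ((Real.sqrt n + Real.sqrt r) ^ 2) :=
            Real.sqrt_le_sqrt h2
        _ = Real.sqrt n + Real.sqrt r := Real.sqrt_sq (by positivity)
    have hc_eq : c = Real.sqrt (n + r) / Real.sqrt n := by
      rw [hc_def, Real.sqrt_div (by linarith)]
    rw [hc_eq]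
    rw [div_sub' hsn.ne', div_le_div_iff₀ hsn hsn]
    nlinarith [h1, hsn]
  rcases le_or_gt 0 z with hz | hz
  · -- z ≥ 0, so z ≤ c * z
    have hle : z ≤ c * z := by nlinarith
    have := key_bound hle hB (fun ξ hξ => ?_)
    · exact this
    · have hξz : z ≤ ξ := le_of_lt hξ.1
      have hξ0 : 0 ≤ ξ := le_trans hz hξz
      have habs : ξ = |ξ| := (abs_of_nonneg hξ0).symm
      have hd := density_mul_abs_le ξ
      have hd0 : 0 ≤ (Real.sqrt (2 * Real.pi))⁻¹ * Real.exp (-ξ ^ 2 / 2) := by positivity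
      calc (Real.sqrt (2 * Real.pi))⁻¹ * Real.exp (-ξ ^ 2 / 2) * (c * z - z)
          = (Real.sqrt (2 * Real.pi))⁻¹ * Real.exp (-ξ ^ 2 / 2) * z * (c - 1) := by ring
        _ ≤ (Real.sqrt (2 * Real.pi))⁻¹ * Real.exp (-ξ ^ 2 / 2) * |ξ| * (c - 1) := by
            apply mul_le_mul_of_nonneg_right _ (by linarith)
            apply mul_le_mul_of_nonneg_left _ hd0
            rw [← habs]; linarith
        _ ≤ 1 * (c - 1) := mul_le_mul_of_nonneg_right hd (by linarith)
        _ = c - 1 := one_mul _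
        _ ≤ Real.sqrt r / Real.sqrt n := hkey
  · -- z < 0, so c * z ≤ z
    have hle : c * z ≤ z := by nlinarith
    rw [abs_sub_comm]
    have := key_bound hle hB (fun ξ hξ => ?_)
    · exact this
    · have hξz : ξ ≤ z := le_of_lt hξ.2
      have habs : -z ≤ |ξ| := by
        rw [abs_of_nonpos (by linarith)]; linarith
      have hd := density_mul_abs_le ξ
      have hd0 : 0 ≤ (Real.sqrt (2 * Real.pi))⁻¹ * Real.exp (-ξ ^ 2 / 2) := by positivity
      calc (Real.sqrt (2 * Real.pi))⁻¹ * Real.exp (-ξ ^ 2 / 2) * (z - c * z)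
          = (Real.sqrt (2 * Real.pi))⁻¹ * Real.exp (-ξ ^ 2 / 2) * (-z) * (c - 1) := by ring
        _ ≤ (Real.sqrt (2 * Real.pi))⁻¹ * Real.exp (-ξ ^ 2 / 2) * |ξ| * (c - 1) := by
            apply mul_le_mul_of_nonneg_right _ (by linarith)
            exact mul_le_mul_of_nonneg_left habs hd0
        _ ≤ 1 * (c - 1) := mul_le_mul_of_nonneg_right hd (by linarith)
        _ = c - 1 := one_mul _
        _ ≤ Real.sqrt r / Real.sqrt n := hkey
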